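/- In the game Mem (pile of n stones, last move removed k stones, a move removes m stones with m ≥ k and m ≤ pile size), if k² ≥ n then the Grundy value of position (n, k) equals ⌊n/k⌋. -/
import Mathlib

/-- Grundy value of Mem: options of (n,k) are (n-a, a) for k ≤ a ≤ n (with a ≥ 1). -/
noncomputable def memG (n k : ℕ) : ℕ :=
  sInf {v : ℕ | v ∉ ((Finset.Icc (max k 1) n).attach.image
    (fun a => memG (n - a.1) a.1))}
termination_by n
decreasing_by
  have := Finset.mem_Icc.mp a.2
  omega

lemma div_sub_aux (n a : ℕ) (ha : 0 < a) (han : a ≤ n) : (n - a) / a = n / a - 1 := by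
  rw [Nat.div_eq_sub_div ha han, Nat.add_sub_cancel]

lemma div_div_eq_aux (n v : ℕ) (hv : 0 < v) (h : v * v ≤ n) : n / (n / v) = v := by
  have hv2 : v ≤ n / v := (Nat.le_div_iff_mul_le hv).2 h
  have ha : 0 < n / v := lt_of_lt_of_le hv hv2
  apply le_antisymm
  · have hlt : n < (v + 1) * (n / v) := by
      have h1 := Nat.div_add_mod n v
      have h2 : n % v < v := Nat.mod_lt _ hv
      nlinarith
    exact Nat.lt_succ_iff.1 ((Nat.div_lt_iff_lt_mul ha).2 hlt)
  · exact (Nat.le_div_iff_mul_le ha).2 (by rw [Nat.mul_comm]; exact Nat.div_mul_le_self n v)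

/-- In Mem, if k² ≥ n then G(n, k) = ⌊n/k⌋. -/
theorem mem_grundy_of_sq_ge (n k : ℕ) (hk : 1 ≤ k) (h : n ≤ k ^ 2) :
    memG n k = n / k := by
  induction n using Nat.strong_induction_on generalizing k with
  | _ n ih =>
  rw [memG]
  have hmax : max k 1 = k := by omega
  rw [hmax]
  have hmem : ∀ v, (v ∈ (Finset.Icc k n).attach.image (fun a => memG (n - a.1) a.1)
      ↔ ∃ a, (k ≤ a ∧ a ≤ n) ∧ n / a - 1 = v) := by
    intro v
    simp only [Finset.mem_image, Finset.mem_attach, true_and, Subtype.exists,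
      Finset.mem_Icc]
    constructor
    · rintro ⟨a, ⟨hka, han⟩, hv⟩
      have h1 : 1 ≤ a := le_trans hk hka
      have h3 : n - a ≤ a ^ 2 := by
        have : k ^ 2 ≤ a ^ 2 := Nat.pow_le_pow_left hka 2
        omega
      rw [ih _ (by omega) a h1 h3, div_sub_aux n a h1 han] at hv
      exact ⟨a, ⟨hka, han⟩, hv⟩
    · rintro ⟨a, ⟨hka, han⟩, hv⟩
      have h1 : 1 ≤ a := le_trans hk hka
      have h3 : n - a ≤ a ^ 2 := by
        have : k ^ 2 ≤ a ^ 2 := Nat.pow_le_pow_left hka 2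
        omega
      exact ⟨a, ⟨hka, han⟩, by rw [ih _ (by omega) a h1 h3, div_sub_aux n a h1 han, hv]⟩
  have hnkT : n / k ∉ (Finset.Icc k n).attach.image (fun a => memG (n - a.1) a.1) := by
    rw [hmem]
    rintro ⟨a, ⟨hka, han⟩, hv⟩
    have h1 : n / a ≤ n / k := Nat.div_le_div_left hka hk
    have h2 : 1 ≤ n / k := (Nat.one_le_div_iff hk).2 (le_trans hka han)
    omega
  apply le_antisymm
  · exact Nat.sInf_le hnkT
  · by_contra hlt
    push_neg at hlt
    have hne : {v : ℕ | v ∉ (Finset.Icc k n).attach.image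
        (fun a => memG (n - a.1) a.1)}.Nonempty := ⟨n / k, hnkT⟩
    have hjmem := Nat.sInf_mem hne
    set j := sInf {v : ℕ | v ∉ (Finset.Icc k n).attach.image
        (fun a => memG (n - a.1) a.1)} with hj
    apply hjmem
    rw [hmem]
    -- j < n / k; take a = n / (j+1)
    have hv1 : j + 1 ≤ n / k := hlt
    have hkj : k * (j + 1) ≤ n := by rw [Nat.mul_comm]; exact (Nat.le_div_iff_mul_le hk).1 hv1
    have hnkk : n / k ≤ k := by
      calc n / k ≤ k ^ 2 / k := Nat.div_le_div_right h
        _ = k := by rw [pow_two, Nat.mul_div_cancel_left _ hk]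
    have hsq : (j + 1) * (j + 1) ≤ n := by
      calc (j + 1) * (j + 1) ≤ k * (j + 1) := by
            have : j + 1 ≤ k := le_trans hv1 hnkk
            exact Nat.mul_le_mul_right _ this
        _ ≤ n := hkj
    refine ⟨n / (j + 1), ⟨?_, Nat.div_le_self _ _⟩, ?_⟩
    · exact (Nat.le_div_iff_mul_le (by omega)).2 (by omega)
    · rw [div_div_eq_aux n (j + 1) (by omega) hsq]; omega
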